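/- For every integer k ≥ 7 and every α ∈ {1,...,k}, the graph G'_k(p,q) admits a (pp',α)-ECGC using at most k colors. -/

import Mathlib

open SimpleGraph

/-- One step of the greedy coloring algorithm: color the vertex `w` with the smallest
positive integer not already used on one of its (already colored) neighbours.
Color `0` means "not yet colored". -/
noncomputable def greedyStep {V : Type*} [DecidableEq V] (G : SimpleGraph V)
    (f : V → ℕ) (w : V) : V → ℕ :=
  Function.update f w (sInf {n : ℕ | 0 < n ∧ ∀ z, G.Adj w z → f z ≠ n})

/-- The coloring obtained by greedily coloring the vertices of the list `l` in order,
starting from the partial coloring `f₀`. -/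
noncomputable def greedyFrom {V : Type*} [DecidableEq V] (G : SimpleGraph V)
    (f₀ : V → ℕ) (l : List V) : V → ℕ :=
  l.foldl (greedyStep G) f₀

/-- The greedy coloring of the ordering `l` (all vertices initially uncolored). -/
noncomputable def greedy {V : Type*} [DecidableEq V] (G : SimpleGraph V)
    (l : List V) : V → ℕ :=
  greedyFrom G (fun _ => 0) l

/-- `l` is a connected ordering of the vertices of `G`: it lists every vertex exactly once,
and every vertex other than the first has a neighbour occurring earlier in the list. -/
def IsConnectedOrder {V : Type*} (G : SimpleGraph V) (l : List V) : Prop :=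
  l.Nodup ∧ (∀ w : V, w ∈ l) ∧
    ∀ i : Fin l.length, 0 < (i : ℕ) →
      ∃ j : Fin l.length, (j : ℕ) < (i : ℕ) ∧ G.Adj (l.get i) (l.get j)

/-- `f` is a connected greedy coloring (CGC) of `G`. -/
def IsCGC {V : Type*} [DecidableEq V] (G : SimpleGraph V) (f : V → ℕ) : Prop :=
  ∃ l : List V, IsConnectedOrder G l ∧ f = greedy G l

/-- `f` is an `(x, α)`-connected greedy coloring of `G`: it is obtained from a connected
ordering starting at `x` by coloring `x` with `α` and then coloring each subsequent
vertex with the smallest positive integer not appearing on its already-colored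
neighbours. -/
def IsCGCFrom {V : Type*} [DecidableEq V] (G : SimpleGraph V) (x : V) (α : ℕ)
    (f : V → ℕ) : Prop :=
  ∃ l : List V, IsConnectedOrder G (x :: l) ∧
    f = greedyFrom G (Function.update (fun _ => 0) x α) l

/-- `f` uses exactly `k` colors. -/
def UsesColors {V : Type*} (f : V → ℕ) (k : ℕ) : Prop :=
  ∃ s : Finset ℕ, (∀ w, f w ∈ s) ∧ (∀ c ∈ s, ∃ w, f w = c) ∧ s.card = k

/-- The connected chromatic number of `G`: the least `k` such that some connected greedy
coloring of `G` only uses colors in `{1, …, k}`. -/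
noncomputable def connChrom {V : Type*} [DecidableEq V] (G : SimpleGraph V) : ℕ :=
  sInf {k | ∃ f, IsCGC G f ∧ ∀ w, f w ≤ k}

/-- The vertices of the edge gadget `G'_k(p,q)`: the two parts `P` and `Q` of a complete
bipartite graph `K_{k-1,k-1}`, and the four vertices `p, p', q, q'`. -/
inductive EGVert (k : ℕ) where
  | p : EGVert k
  | p' : EGVert k
  | q : EGVert k
  | q' : EGVert k
  | P : Fin (k - 1) → EGVert k
  | Q : Fin (k - 1) → EGVert k
deriving DecidableEq

/-- The edge gadget `G'_k(p,q)`: a complete bipartite graph with parts `P` and `Q`,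
with `p'` complete to `P`, `q'` complete to `Q`, and the extra edges `pp'` and `qq'`. -/
def EG (k : ℕ) : SimpleGraph (EGVert k) :=
  SimpleGraph.fromRel (fun a b =>
    (∃ i j, a = EGVert.P i ∧ b = EGVert.Q j) ∨
    (∃ i, a = EGVert.p' ∧ b = EGVert.P i) ∨
    (∃ i, a = EGVert.q' ∧ b = EGVert.Q i) ∨
    (a = EGVert.p ∧ b = EGVert.p') ∨
    (a = EGVert.q ∧ b = EGVert.q'))

theorem EG_adj_pp' (k : ℕ) : (EG k).Adj EGVert.p EGVert.p' := by
  rw [EG, SimpleGraph.fromRel_adj]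
  exact ⟨fun h => (by cases h), Or.inl (by tauto)⟩

theorem EG_adj_qq' (k : ℕ) : (EG k).Adj EGVert.q EGVert.q' := by
  rw [EG, SimpleGraph.fromRel_adj]
  exact ⟨fun h => (by cases h), Or.inl (by tauto)⟩

/-- The edge `pp'` of the edge gadget, as a vertex of its line graph. -/
def edgePP (k : ℕ) : (EG k).edgeSet := ⟨s(EGVert.p, EGVert.p'), EG_adj_pp' k⟩

/-- The edge `qq'` of the edge gadget, as a vertex of its line graph. -/
def edgeQQ (k : ℕ) : (EG k).edgeSet := ⟨s(EGVert.q, EGVert.q'), EG_adj_qq' k⟩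

lemma greedyFrom_eq_of {V : Type*} [DecidableEq V] (G : SimpleGraph V) (F : V → ℕ) :
    ∀ (l pre : List V),
    (∀ v ∈ l, v ∉ pre) → l.Nodup →
    (∀ v ∈ l, ∀ z, G.Adj v z → F v ≠ F z) →
    (∀ v ∈ l, 0 < F v) →
    (∀ l₁ v l₂, l = l₁ ++ v :: l₂ → ∀ s, 0 < s → s < F v →
        ∃ z, G.Adj v z ∧ F z = s ∧ (z ∈ pre ∨ z ∈ l₁)) →
    greedyFrom G (fun w => if w ∈ pre then F w else 0) l
      = fun w => if w ∈ pre ++ l then F w else 0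
  | [], pre, _, _, _, _, _ => by
      funext w; simp [greedyFrom]
  | v :: l', pre, hdisj, hnd, hprop, hpos, hwit => by
      have hvpre : v ∉ pre := hdisj v (by simp)
      have hFv : 0 < F v := hpos v (by simp)
      set f : V → ℕ := fun w => if w ∈ pre then F w else 0 with hf
      have hstep : greedyStep G f v = fun w => if w ∈ pre ++ [v] then F w else 0 := by
        have hmem : F v ∈ {n : ℕ | 0 < n ∧ ∀ z, G.Adj v z → f z ≠ n} := by
          refine ⟨hFv, fun z hz => ?_⟩
          simp only [hf]
          split
          · exact fun h => (hprop v (by simp) z hz) h.symm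
          · omega
        have hsInf : sInf {n : ℕ | 0 < n ∧ ∀ z, G.Adj v z → f z ≠ n} = F v := by
          have h1 : sInf {n : ℕ | 0 < n ∧ ∀ z, G.Adj v z → f z ≠ n} ≤ F v := Nat.sInf_le hmem
          have h2 := Nat.sInf_mem (⟨F v, hmem⟩ : {n : ℕ | 0 < n ∧ ∀ z, G.Adj v z → f z ≠ n}.Nonempty)
          rcases lt_or_eq_of_le h1 with hlt | heq
          · exfalso
            obtain ⟨z, hadj, hFz, hz⟩ := hwit [] v l' rfl _ h2.1 hlt
            have : f z = sInf {n : ℕ | 0 < n ∧ ∀ z, G.Adj v z → f z ≠ n} := by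
              have : z ∈ pre := by rcases hz with h | h; exact h; simp at h
              simp [hf, this, hFz]
            exact h2.2 z hadj this
          · exact heq
        funext w
        by_cases hw : w = v
        · subst hw; simp [greedyStep, hsInf]
        · simp [greedyStep, Function.update_of_ne hw, hf, hw]
      have heq2 : greedyFrom G f (v :: l') = greedyFrom G (greedyStep G f v) l' := rfl
      rw [heq2, hstep]
      have IH := greedyFrom_eq_of G F l' (pre ++ [v])
        (by
          intro w hw
          simp only [List.mem_append, List.mem_singleton]
          rintro (h | rfl)
          · exact hdisj w (by simp [hw]) h
          · exact (List.nodup_cons.mp hnd).1 hw)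
        (List.nodup_cons.mp hnd).2
        (fun w hw => hprop w (by simp [hw]))
        (fun w hw => hpos w (by simp [hw]))
        (by
          intro l₁ w l₂ hdecomp s hs hsF
          obtain ⟨z, hadj, hFz, hz⟩ := hwit (v :: l₁) w l₂ (by simp [hdecomp]) s hs hsF
          refine ⟨z, hadj, hFz, ?_⟩
          rcases hz with h | h
          · exact Or.inl (by simp [h])
          · rcases List.mem_cons.mp h with rfl | h
            · exact Or.inl (by simp)
            · exact Or.inr h)
      rw [IH]
      funext w
      have hiff : (w ∈ pre ++ [v] ++ l') ↔ (w ∈ pre ++ v :: l') := by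
        simp only [List.mem_append, List.mem_cons, List.mem_singleton]
        tauto
      by_cases h : w ∈ pre ++ v :: l' <;> simp_all

lemma greedyFrom_start {V : Type*} [DecidableEq V] (G : SimpleGraph V) (F : V → ℕ)
    (x : V) (hx : 0 < F x) (l : List V)
    (hnd : (x :: l).Nodup)
    (hprop : ∀ v ∈ l, ∀ z, G.Adj v z → F v ≠ F z)
    (hpos : ∀ v ∈ l, 0 < F v)
    (hwit : ∀ l₁ v l₂, l = l₁ ++ v :: l₂ → ∀ s, 0 < s → s < F v →
        ∃ z, G.Adj v z ∧ F z = s ∧ (z = x ∨ z ∈ l₁)) :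
    greedyFrom G (Function.update (fun _ => 0) x (F x)) l
      = fun w => if w ∈ x :: l then F w else 0 := by
  have h0 : (Function.update (fun _ => 0 : V → ℕ) x (F x)) = fun w => if w ∈ [x] then F w else 0 := by
    funext w
    by_cases hw : w = x <;> simp [Function.update_apply, hw]
  rw [h0, greedyFrom_eq_of G F l [x]
    (by intro v hv; simp; intro h; subst h; exact (List.nodup_cons.mp hnd).1 hv)
    (List.nodup_cons.mp hnd).2 hprop hpos
    (by intro l₁ v l₂ hd s hs hsf
        obtain ⟨z, h1, h2, h3⟩ := hwit l₁ v l₂ hd s hs hsf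
        refine ⟨z, h1, h2, ?_⟩
        rcases h3 with h | h
        · exact Or.inl (by simp [h])
        · exact Or.inr h)]
  funext w; simp

lemma mem_left_of_sorted_decomp {V : Type*} (r : V → ℕ) {l l₁ l₂ : List V} {v : V}
    (hs : l.Pairwise (fun a b => r a ≤ r b)) (h : l = l₁ ++ v :: l₂)
    {z : V} (hz : z ∈ l) (hr : r z < r v) : z ∈ l₁ := by
  subst h
  rcases List.mem_append.mp hz with h | h
  · exact h
  · rcases List.mem_cons.mp h with rfl | h
    · omega
    · exfalso
      have := (List.pairwise_append.mp hs).2.1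
      have := (List.pairwise_cons.mp this).1 z h
      omega

lemma isConnectedOrder_of_sorted {V : Type*} (G : SimpleGraph V) (x : V) (l : List V)
    (r : V → ℕ)
    (hnd : (x :: l).Nodup) (hall : ∀ w, w ∈ x :: l)
    (hs : l.Pairwise (fun a b => r a ≤ r b))
    (hconn : ∀ v ∈ l, ∃ z, G.Adj v z ∧ (z = x ∨ (z ∈ l ∧ r z < r v))) :
    IsConnectedOrder G (x :: l) := by
  refine ⟨hnd, hall, ?_⟩
  rintro ⟨i, hi⟩ hpos
  simp only at hpos
  obtain ⟨n, rfl⟩ : ∃ n, i = n + 1 := ⟨i - 1, by omega⟩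
  have hn : n < l.length := by simpa using hi
  set v := l.get ⟨n, hn⟩ with hv
  have hvl : v ∈ l := List.get_mem l ⟨n, hn⟩
  obtain ⟨z, hadj, hz⟩ := hconn v hvl
  have hget : (x :: l).get ⟨n + 1, hi⟩ = v := rfl
  rcases hz with rfl | ⟨hzl, hr⟩
  · refine ⟨⟨0, Nat.succ_pos _⟩, ?_, ?_⟩
    · simp
    · exact hadj
  · obtain ⟨m, hm⟩ := List.get_of_mem hzl
    have hmn : (m : ℕ) < n := by
      rcases lt_trichotomy (m : ℕ) n with h | h | h
      · exact h
      · exfalso; apply lt_irrefl (r v); rw [← hm] at hr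
        have : m = (⟨n, hn⟩ : Fin l.length) := Fin.ext h
        rw [this] at hr; exact hr
      · exfalso
        have h2 := List.pairwise_iff_get.mp hs ⟨n, hn⟩ m h
        rw [hm, ← hv] at h2; omega
    have hlt : (m : ℕ) + 1 < (x :: l).length := by
      have := m.isLt; simp only [List.length_cons]; omega
    refine ⟨⟨(m : ℕ) + 1, hlt⟩, ?_, ?_⟩
    · simpa using hmn
    · have h3 : (x :: l).get ⟨(m : ℕ) + 1, hlt⟩ = l.get m := by simp
      rw [hget, h3, hm]
      exact hadj


namespace St12

theorem EG_adj_p'P (k : ℕ) (i : Fin (k-1)) : (EG k).Adj EGVert.p' (EGVert.P i) := by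
  rw [EG, SimpleGraph.fromRel_adj]
  exact ⟨fun h => (by cases h), Or.inl (Or.inr (Or.inl ⟨i, rfl, rfl⟩))⟩

theorem EG_adj_q'Q (k : ℕ) (j : Fin (k-1)) : (EG k).Adj EGVert.q' (EGVert.Q j) := by
  rw [EG, SimpleGraph.fromRel_adj]
  exact ⟨fun h => (by cases h), Or.inl (Or.inr (Or.inr (Or.inl ⟨j, rfl, rfl⟩)))⟩

theorem EG_adj_PQ (k : ℕ) (i j : Fin (k-1)) : (EG k).Adj (EGVert.P i) (EGVert.Q j) := by
  rw [EG, SimpleGraph.fromRel_adj]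
  exact ⟨fun h => (by cases h), Or.inl (Or.inl ⟨i, j, rfl, rfl⟩)⟩

def eP (k : ℕ) (i : Fin (k-1)) : (EG k).edgeSet := ⟨s(EGVert.p', EGVert.P i), EG_adj_p'P k i⟩
def eQ (k : ℕ) (j : Fin (k-1)) : (EG k).edgeSet := ⟨s(EGVert.q', EGVert.Q j), EG_adj_q'Q k j⟩
def eB (k : ℕ) (i j : Fin (k-1)) : (EG k).edgeSet := ⟨s(EGVert.P i, EGVert.Q j), EG_adj_PQ k i j⟩

/-- The index of the colour (minus one) used on the edge `p'Pᵢ`. -/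
def ei (α : ℕ) {k : ℕ} (i : Fin (k-1)) : ℕ := if (i:ℕ)+1 < α then (i:ℕ) else (i:ℕ)+1

def cC (α : ℕ) {k : ℕ} (i : Fin (k-1)) : ℕ := ei α i + 1
def dC (k α : ℕ) (j : Fin (k-1)) : ℕ := ((j:ℕ) + α) % k + 1
def aC (k α : ℕ) (i j : Fin (k-1)) : ℕ := (ei α i + (j:ℕ) + 1) % k + 1

def colV (k α : ℕ) : EGVert k → EGVert k → ℕ
  | .p, .p' => α
  | .p', .p => α
  | .q, .q' => α
  | .q', .q => α
  | .p', .P i => cC α i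
  | .P i, .p' => cC α i
  | .q', .Q j => dC k α j
  | .Q j, .q' => dC k α j
  | .P i, .Q j => aC k α i j
  | .Q j, .P i => aC k α i j
  | _, _ => 0

lemma colV_symm (k α : ℕ) (a b : EGVert k) : colV k α a b = colV k α b a := by
  cases a <;> cases b <;> rfl

def rkV (k α : ℕ) : EGVert k → EGVert k → ℕ
  | .p', .P i => (i:ℕ) + 1
  | .P i, .p' => (i:ℕ) + 1
  | .P i, .Q j => k + aC k α i j
  | .Q j, .P i => k + aC k α i j
  | .q', .Q j => 2*k + dC k α j
  | .Q j, .q' => 2*k + dC k α j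
  | .q, .q' => 4*k
  | .q', .q => 4*k
  | _, _ => 0

lemma rkV_symm (k α : ℕ) (a b : EGVert k) : rkV k α a b = rkV k α b a := by
  cases a <;> cases b <;> rfl

noncomputable def Fc (k α : ℕ) (e : (EG k).edgeSet) : ℕ :=
  Sym2.lift ⟨colV k α, colV_symm k α⟩ e.val

noncomputable def rk (k α : ℕ) (e : (EG k).edgeSet) : ℕ :=
  Sym2.lift ⟨rkV k α, rkV_symm k α⟩ e.val

@[simp] lemma Fc_edgePP (k α : ℕ) : Fc k α (edgePP k) = α := rfl
@[simp] lemma Fc_edgeQQ (k α : ℕ) : Fc k α (edgeQQ k) = α := rfl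
@[simp] lemma Fc_eP (k α : ℕ) (i) : Fc k α (eP k i) = cC α i := rfl
@[simp] lemma Fc_eQ (k α : ℕ) (j) : Fc k α (eQ k j) = dC k α j := rfl
@[simp] lemma Fc_eB (k α : ℕ) (i j) : Fc k α (eB k i j) = aC k α i j := rfl
@[simp] lemma rk_edgePP (k α : ℕ) : rk k α (edgePP k) = 0 := rfl
@[simp] lemma rk_edgeQQ (k α : ℕ) : rk k α (edgeQQ k) = 4*k := rfl
@[simp] lemma rk_eP (k α : ℕ) (i) : rk k α (eP k i) = (i:ℕ) + 1 := rfl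
@[simp] lemma rk_eQ (k α : ℕ) (j) : rk k α (eQ k j) = 2*k + dC k α j := rfl
@[simp] lemma rk_eB (k α : ℕ) (i j) : rk k α (eB k i j) = k + aC k α i j := rfl

/-- Classification of the edges of `EG k`. -/
lemma edge_cases {k : ℕ} (e : (EG k).edgeSet) :
    e = edgePP k ∨ e = edgeQQ k ∨ (∃ i, e = eP k i) ∨ (∃ j, e = eQ k j) ∨
      (∃ i j, e = eB k i j) := by
  obtain ⟨e, he⟩ := e
  induction e with
  | _ a b =>
    rw [SimpleGraph.mem_edgeSet, EG, SimpleGraph.fromRel_adj] at he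
    obtain ⟨-, h | h⟩ := he
    · rcases h with ⟨i, j, rfl, rfl⟩ | ⟨i, rfl, rfl⟩ | ⟨i, rfl, rfl⟩ | ⟨rfl, rfl⟩ | ⟨rfl, rfl⟩
      · exact Or.inr (Or.inr (Or.inr (Or.inr ⟨i, j, rfl⟩)))
      · exact Or.inr (Or.inr (Or.inl ⟨i, rfl⟩))
      · exact Or.inr (Or.inr (Or.inr (Or.inl ⟨i, rfl⟩)))
      · exact Or.inl rfl
      · exact Or.inr (Or.inl rfl)
    · rcases h with ⟨i, j, rfl, rfl⟩ | ⟨i, rfl, rfl⟩ | ⟨i, rfl, rfl⟩ | ⟨rfl, rfl⟩ | ⟨rfl, rfl⟩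
      · exact Or.inr (Or.inr (Or.inr (Or.inr ⟨i, j, Subtype.ext (Sym2.eq_swap)⟩)))
      · exact Or.inr (Or.inr (Or.inl ⟨i, Subtype.ext (Sym2.eq_swap)⟩))
      · exact Or.inr (Or.inr (Or.inr (Or.inl ⟨i, Subtype.ext (Sym2.eq_swap)⟩)))
      · exact Or.inl (Subtype.ext (Sym2.eq_swap))
      · exact Or.inr (Or.inl (Subtype.ext (Sym2.eq_swap)))

section Arith
variable {k α : ℕ}

lemma mod_small_cases (hk : 0 < k) {x : ℕ} (hx : x < 2*k) :
    x % k = x ∧ x < k ∨ x % k = x - k ∧ k ≤ x := by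
  rcases Nat.lt_or_ge x k with h | h
  · exact Or.inl ⟨Nat.mod_eq_of_lt h, h⟩
  · refine Or.inr ⟨?_, h⟩
    rw [Nat.mod_eq_sub_mod h, Nat.mod_eq_of_lt (by omega)]

lemma ei_lt {i : Fin (k-1)} : ei α i ≤ k - 1 := by
  have := i.isLt; unfold ei; split <;> omega

lemma ei_ne (hα1 : 1 ≤ α) {i : Fin (k-1)} : ei α i ≠ α - 1 := by
  unfold ei; split <;> omega

lemma ei_inj {i i' : Fin (k-1)} (h : i ≠ i') : ei α i ≠ ei α i' := by
  have := Fin.val_ne_of_ne h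
  unfold ei; split <;> split <;> omega

lemma cC_ne_alpha (hα1 : 1 ≤ α) {i : Fin (k-1)} : cC α i ≠ α := by
  have := ei_ne (k := k) hα1 (i := i); unfold cC; omega

lemma cC_inj {i i' : Fin (k-1)} (h : i ≠ i') : cC α i ≠ cC α i' := by
  have := ei_inj (α := α) h; unfold cC; omega

lemma cC_le {i : Fin (k-1)} : cC α i ≤ k := by
  have := i.isLt; have : (i:ℕ) ≤ k - 2 := by omega
  unfold cC ei; split <;> omega

lemma cC_pos {i : Fin (k-1)} : 1 ≤ cC α i := by unfold cC; omega

lemma dC_le (hk : 0 < k) {j : Fin (k-1)} : dC k α j ≤ k := by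
  have := Nat.mod_lt ((j:ℕ) + α) hk; unfold dC; omega

lemma dC_pos {j : Fin (k-1)} : 1 ≤ dC k α j := by unfold dC; omega

lemma aC_le (hk : 0 < k) {i j : Fin (k-1)} : aC k α i j ≤ k := by
  have := Nat.mod_lt (ei α i + (j:ℕ) + 1) hk; unfold aC; omega

lemma aC_pos {i j : Fin (k-1)} : 1 ≤ aC k α i j := by unfold aC; omega

lemma dC_ne_alpha (hk : 0 < k) (hα1 : 1 ≤ α) (hα2 : α ≤ k) {j : Fin (k-1)} : dC k α j ≠ α := by
  have hj := j.isLt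
  have h2 : (j:ℕ) + α < 2*k := by omega
  unfold dC
  rcases mod_small_cases hk h2 with ⟨h, h'⟩ | ⟨h, h'⟩ <;> omega

lemma dC_inj (hk : 0 < k) (hα2 : α ≤ k) {j j' : Fin (k-1)} (h : j ≠ j') :
    dC k α j ≠ dC k α j' := by
  have := Fin.val_ne_of_ne h
  have hj := j.isLt; have hj' := j'.isLt
  unfold dC
  rcases mod_small_cases hk (x := (j:ℕ) + α) (by omega) with ⟨h1, h1'⟩ | ⟨h1, h1'⟩ <;>
    rcases mod_small_cases hk (x := (j':ℕ) + α) (by omega) with ⟨h2, h2'⟩ | ⟨h2, h2'⟩ <;> omega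

lemma aC_ne_cC (hk : 0 < k) {i j : Fin (k-1)} : aC k α i j ≠ cC α i := by
  have hj := j.isLt; have he := ei_lt (α := α) (i := i)
  unfold aC cC
  rcases mod_small_cases hk (x := ei α i + (j:ℕ) + 1) (by omega) with ⟨h, h'⟩ | ⟨h, h'⟩ <;> omega

lemma aC_inj_right (hk : 0 < k) {i j j' : Fin (k-1)} (h : j ≠ j') :
    aC k α i j ≠ aC k α i j' := by
  have := Fin.val_ne_of_ne h
  have hj := j.isLt; have hj' := j'.isLt; have he := ei_lt (α := α) (i := i)
  unfold aC
  rcases mod_small_cases hk (x := ei α i + (j:ℕ) + 1) (by omega) with ⟨h1, h1'⟩ | ⟨h1, h1'⟩ <;>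
    rcases mod_small_cases hk (x := ei α i + (j':ℕ) + 1) (by omega) with ⟨h2, h2'⟩ | ⟨h2, h2'⟩ <;>
      omega

lemma aC_inj_left (hk : 0 < k) {i i' j : Fin (k-1)} (h : i ≠ i') :
    aC k α i j ≠ aC k α i' j := by
  have := ei_inj (α := α) h
  have hj := j.isLt
  have he := ei_lt (α := α) (i := i); have he' := ei_lt (α := α) (i := i')
  unfold aC
  rcases mod_small_cases hk (x := ei α i + (j:ℕ) + 1) (by omega) with ⟨h1, h1'⟩ | ⟨h1, h1'⟩ <;>
    rcases mod_small_cases hk (x := ei α i' + (j:ℕ) + 1) (by omega) with ⟨h2, h2'⟩ | ⟨h2, h2'⟩ <;>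
      omega

lemma aC_ne_dC (hk : 0 < k) (hα1 : 1 ≤ α) (hα2 : α ≤ k) {i j : Fin (k-1)} :
    aC k α i j ≠ dC k α j := by
  have hj := j.isLt
  have he := ei_lt (α := α) (i := i)
  have hne := ei_ne (k := k) hα1 (i := i)
  unfold aC dC
  rcases mod_small_cases hk (x := ei α i + (j:ℕ) + 1) (by omega) with ⟨h1, h1'⟩ | ⟨h1, h1'⟩ <;>
    rcases mod_small_cases hk (x := (j:ℕ) + α) (by omega) with ⟨h2, h2'⟩ | ⟨h2, h2'⟩ <;> omega

/-- witnesses for the `p'`-star -/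
lemma exists_cwit (hα1 : 1 ≤ α) {i : Fin (k-1)} {s : ℕ} (hs1 : 1 ≤ s)
    (hs2 : s < cC α i) (hsa : s ≠ α) :
    ∃ i' : Fin (k-1), cC α i' = s ∧ (i' : ℕ) < (i : ℕ) := by
  have hi := i.isLt
  rcases Nat.lt_or_ge s α with h | h
  · have hb : s - 1 < k - 1 := by unfold cC ei at hs2; split at hs2 <;> omega
    refine ⟨⟨s - 1, hb⟩, ?_, ?_⟩
    · show (if (s-1)+1 < α then s-1 else (s-1)+1) + 1 = s
      split <;> omega
    · show s - 1 < (i:ℕ)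
      unfold cC ei at hs2; split at hs2 <;> omega
  · have hb : s - 2 < k - 1 := by unfold cC ei at hs2; split at hs2 <;> omega
    refine ⟨⟨s - 2, hb⟩, ?_, ?_⟩
    · show (if (s-2)+1 < α then s-2 else (s-2)+1) + 1 = s
      split <;> omega
    · show s - 2 < (i:ℕ)
      unfold cC ei at hs2; split at hs2 <;> omega

/-- witnesses in a row of the bipartite part -/
lemma exists_row (hk : 2 ≤ k) {i : Fin (k-1)} {s : ℕ} (hs1 : 1 ≤ s) (hs2 : s ≤ k)
    (hsc : s ≠ cC α i) : ∃ j' : Fin (k-1), aC k α i j' = s := by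
  have he := ei_lt (α := α) (i := i)
  have hsc' : s ≠ ei α i + 1 := hsc
  rcases Nat.lt_or_ge (ei α i + 1) s with h | h
  · refine ⟨⟨s - ei α i - 2, by omega⟩, ?_⟩
    show (ei α i + (s - ei α i - 2) + 1) % k + 1 = s
    have h1 : ei α i + (s - ei α i - 2) + 1 = s - 1 := by omega
    rw [h1, Nat.mod_eq_of_lt (by omega)]; omega
  · have h' : s ≤ ei α i := by omega
    refine ⟨⟨k + s - 2 - ei α i, by omega⟩, ?_⟩
    show (ei α i + (k + s - 2 - ei α i) + 1) % k + 1 = s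
    have h1 : ei α i + (k + s - 2 - ei α i) + 1 = k + (s - 1) := by omega
    rw [h1, Nat.add_mod_left, Nat.mod_eq_of_lt (by omega)]; omega

/-- witnesses in a column of the bipartite part -/
lemma exists_col (hk : 2 ≤ k) (hα1 : 1 ≤ α) (hα2 : α ≤ k) {j : Fin (k-1)} {s : ℕ}
    (hs1 : 1 ≤ s) (hs2 : s ≤ k) (hsd : s ≠ dC k α j) :
    ∃ i' : Fin (k-1), aC k α i' j = s := by
  have hj := j.isLt
  -- find u with (u + j + 1) % k = s - 1, u ≤ k-1, u ≠ α - 1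
  obtain ⟨u, hu1, hu2⟩ : ∃ u, u ≤ k - 1 ∧ (u + (j:ℕ) + 1) % k = s - 1 := by
    rcases Nat.lt_or_ge ((j:ℕ) + 1) s with h | h
    · exact ⟨s - 1 - ((j:ℕ) + 1), by omega, by
        have h1 : s - 1 - ((j:ℕ)+1) + (j:ℕ) + 1 = s - 1 := by omega
        rw [h1, Nat.mod_eq_of_lt (by omega)]⟩
    · exact ⟨k + s - 1 - ((j:ℕ) + 1), by omega, by
        have h1 : k + s - 1 - ((j:ℕ)+1) + (j:ℕ) + 1 = k + (s - 1) := by omega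
        rw [h1, Nat.add_mod_left, Nat.mod_eq_of_lt (by omega)]⟩
  have hune : u ≠ α - 1 := by
    intro hu
    apply hsd
    have : dC k α j = ((j:ℕ) + α) % k + 1 := rfl
    have h2 : u + (j:ℕ) + 1 = (j:ℕ) + α := by omega
    rw [h2] at hu2
    omega
  rcases Nat.lt_or_ge u (α - 1) with h | h
  · refine ⟨⟨u, by omega⟩, ?_⟩
    show (ei α ⟨u, by omega⟩ + (j:ℕ) + 1) % k + 1 = s
    have : ei α (⟨u, by omega⟩ : Fin (k-1)) = u := by
      show (if u + 1 < α then u else u + 1) = u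
      split <;> omega
    rw [this, hu2]; omega
  · have h' : α ≤ u := by omega
    refine ⟨⟨u - 1, by omega⟩, ?_⟩
    show (ei α ⟨u - 1, by omega⟩ + (j:ℕ) + 1) % k + 1 = s
    have : ei α (⟨u - 1, by omega⟩ : Fin (k-1)) = u := by
      show (if u - 1 + 1 < α then u - 1 else u - 1 + 1) = u
      split <;> omega
    rw [this, hu2]; omega

/-- witnesses at `q'` -/
lemma exists_dwit (hα2 : α ≤ k) {s : ℕ} (hs1 : 1 ≤ s) (hs2 : s < α) :
    ∃ j : Fin (k-1), dC k α j = s := by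
  refine ⟨⟨k - α + s - 1, by omega⟩, ?_⟩
  show ((k - α + s - 1) + α) % k + 1 = s
  have h1 : (k - α + s - 1) + α = k + (s - 1) := by omega
  rw [h1, Nat.add_mod_left, Nat.mod_eq_of_lt (by omega)]; omega

end Arith

section Edges
variable {k α : ℕ}

@[simp] lemma eP_inj {i i' : Fin (k-1)} : eP k i = eP k i' ↔ i = i' := by
  simp [eP, Subtype.ext_iff, Sym2.eq_iff]

@[simp] lemma eQ_inj {j j' : Fin (k-1)} : eQ k j = eQ k j' ↔ j = j' := by
  simp [eQ, Subtype.ext_iff, Sym2.eq_iff]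

@[simp] lemma eB_inj {i i' j j' : Fin (k-1)} : eB k i j = eB k i' j' ↔ i = i' ∧ j = j' := by
  simp [eB, Subtype.ext_iff, Sym2.eq_iff]

@[simp] lemma edgePP_ne_eP {i : Fin (k-1)} : edgePP k ≠ eP k i := by
  simp [edgePP, eP, Subtype.ext_iff, Sym2.eq_iff]
@[simp] lemma eP_ne_edgePP {i : Fin (k-1)} : eP k i ≠ edgePP k := by
  simp [edgePP, eP, Subtype.ext_iff, Sym2.eq_iff]
@[simp] lemma edgePP_ne_eQ {j : Fin (k-1)} : edgePP k ≠ eQ k j := by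
  simp [edgePP, eQ, Subtype.ext_iff, Sym2.eq_iff]
@[simp] lemma eQ_ne_edgePP {j : Fin (k-1)} : eQ k j ≠ edgePP k := by
  simp [edgePP, eQ, Subtype.ext_iff, Sym2.eq_iff]
@[simp] lemma edgePP_ne_eB {i j : Fin (k-1)} : edgePP k ≠ eB k i j := by
  simp [edgePP, eB, Subtype.ext_iff, Sym2.eq_iff]
@[simp] lemma eB_ne_edgePP {i j : Fin (k-1)} : eB k i j ≠ edgePP k := by
  simp [edgePP, eB, Subtype.ext_iff, Sym2.eq_iff]
@[simp] lemma edgePP_ne_edgeQQ : edgePP k ≠ edgeQQ k := by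
  simp [edgePP, edgeQQ, Subtype.ext_iff, Sym2.eq_iff]
@[simp] lemma edgeQQ_ne_edgePP : edgeQQ k ≠ edgePP k := by
  simp [edgePP, edgeQQ, Subtype.ext_iff, Sym2.eq_iff]
@[simp] lemma edgeQQ_ne_eP {i : Fin (k-1)} : edgeQQ k ≠ eP k i := by
  simp [edgeQQ, eP, Subtype.ext_iff, Sym2.eq_iff]
@[simp] lemma eP_ne_edgeQQ {i : Fin (k-1)} : eP k i ≠ edgeQQ k := by
  simp [edgeQQ, eP, Subtype.ext_iff, Sym2.eq_iff]
@[simp] lemma edgeQQ_ne_eQ {j : Fin (k-1)} : edgeQQ k ≠ eQ k j := by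
  simp [edgeQQ, eQ, Subtype.ext_iff, Sym2.eq_iff]
@[simp] lemma eQ_ne_edgeQQ {j : Fin (k-1)} : eQ k j ≠ edgeQQ k := by
  simp [edgeQQ, eQ, Subtype.ext_iff, Sym2.eq_iff]
@[simp] lemma edgeQQ_ne_eB {i j : Fin (k-1)} : edgeQQ k ≠ eB k i j := by
  simp [edgeQQ, eB, Subtype.ext_iff, Sym2.eq_iff]
@[simp] lemma eB_ne_edgeQQ {i j : Fin (k-1)} : eB k i j ≠ edgeQQ k := by
  simp [edgeQQ, eB, Subtype.ext_iff, Sym2.eq_iff]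
@[simp] lemma eP_ne_eQ {i j : Fin (k-1)} : eP k i ≠ eQ k j := by
  simp [eP, eQ, Subtype.ext_iff, Sym2.eq_iff]
@[simp] lemma eQ_ne_eP {i j : Fin (k-1)} : eQ k j ≠ eP k i := by
  simp [eP, eQ, Subtype.ext_iff, Sym2.eq_iff]
@[simp] lemma eP_ne_eB {i i' j : Fin (k-1)} : eP k i ≠ eB k i' j := by
  simp [eP, eB, Subtype.ext_iff, Sym2.eq_iff]
@[simp] lemma eB_ne_eP {i i' j : Fin (k-1)} : eB k i' j ≠ eP k i := by
  simp [eP, eB, Subtype.ext_iff, Sym2.eq_iff]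
@[simp] lemma eQ_ne_eB {i j j' : Fin (k-1)} : eQ k j ≠ eB k i j' := by
  simp [eQ, eB, Subtype.ext_iff, Sym2.eq_iff]
@[simp] lemma eB_ne_eQ {i j j' : Fin (k-1)} : eB k i j' ≠ eQ k j := by
  simp [eQ, eB, Subtype.ext_iff, Sym2.eq_iff]

lemma ladj {e f : (EG k).edgeSet} (hne : e ≠ f) (v : EGVert k)
    (h1 : v ∈ (e : Sym2 (EGVert k))) (h2 : v ∈ (f : Sym2 (EGVert k))) :
    ((EG k).lineGraph).Adj e f :=
  SimpleGraph.lineGraph_adj_iff_exists.mpr ⟨hne, v, h1, h2⟩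

end Edges

section Proper
variable {k α : ℕ}

lemma Fc_proper (hk : 7 ≤ k) (hα1 : 1 ≤ α) (hα2 : α ≤ k) :
    ∀ e f : (EG k).edgeSet, ((EG k).lineGraph).Adj e f → Fc k α e ≠ Fc k α f := by
  have hk0 : 0 < k := by omega
  have hk2 : 2 ≤ k := by omega
  intro e f hadj
  obtain ⟨hne, v, hv1, hv2⟩ := SimpleGraph.lineGraph_adj_iff_exists.mp hadj
  rcases edge_cases e with rfl | rfl | ⟨i, rfl⟩ | ⟨j, rfl⟩ | ⟨i, j, rfl⟩ <;>
      rcases edge_cases f with rfl | rfl | ⟨i', rfl⟩ | ⟨j', rfl⟩ | ⟨i', j', rfl⟩ <;>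
      simp only [edgePP, edgeQQ, eP, eQ, eB, Sym2.mem_iff] at hv1 hv2
  -- e = PP
  · exact absurd rfl hne
  · rcases hv1 with rfl | rfl <;> simp_all
  · rcases hv1 with rfl | rfl <;> rcases hv2 with h | h <;> simp_all
    exact fun hc => (cC_ne_alpha hα1 (i := i')) hc.symm
  · rcases hv1 with rfl | rfl <;> simp_all
  · rcases hv1 with rfl | rfl <;> simp_all
  -- e = QQ
  · rcases hv1 with rfl | rfl <;> simp_all
  · exact absurd rfl hne
  · rcases hv1 with rfl | rfl <;> simp_all
  · rcases hv1 with rfl | rfl <;> rcases hv2 with h | h <;> simp_all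
    exact fun hc => (dC_ne_alpha hk0 hα1 hα2 (j := j')) hc.symm
  · rcases hv1 with rfl | rfl <;> simp_all
  -- e = eP i
  · rcases hv1 with rfl | rfl <;> rcases hv2 with h | h <;> simp_all
    exact cC_ne_alpha hα1
  · rcases hv1 with rfl | rfl <;> simp_all
  · rcases hv1 with rfl | rfl <;> rcases hv2 with h | h <;> simp_all
    all_goals exact cC_inj hne
  · rcases hv1 with rfl | rfl <;> simp_all
  · rcases hv1 with rfl | rfl <;> rcases hv2 with h | h <;> simp_all
    all_goals first
      | exact aC_ne_cC hk0
      | exact fun hc => aC_ne_cC hk0 hc.symm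
      | exact aC_ne_dC hk0 hα1 hα2
      | exact fun hc => aC_ne_dC hk0 hα1 hα2 hc.symm
      | exact dC_inj hk0 hα2 hne
      | exact aC_inj_right hk0 hne
      | exact aC_inj_left hk0 hne
      | exact aC_inj_right hk0 (by intro hj; exact hadj.ne (by simp [hj]))
      | exact aC_inj_left hk0 (by intro hi; exact hadj.ne (by simp [hi]))
  -- e = eQ j
  · rcases hv1 with rfl | rfl <;> simp_all
  · rcases hv1 with rfl | rfl <;> rcases hv2 with h | h <;> simp_all
    exact dC_ne_alpha hk0 hα1 hα2
  · rcases hv1 with rfl | rfl <;> simp_all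
  · rcases hv1 with rfl | rfl <;> rcases hv2 with h | h <;> simp_all
    all_goals first
      | exact aC_ne_cC hk0
      | exact fun hc => aC_ne_cC hk0 hc.symm
      | exact aC_ne_dC hk0 hα1 hα2
      | exact fun hc => aC_ne_dC hk0 hα1 hα2 hc.symm
      | exact dC_inj hk0 hα2 hne
      | exact aC_inj_right hk0 hne
      | exact aC_inj_left hk0 hne
      | exact aC_inj_right hk0 (by intro hj; exact hadj.ne (by simp [hj]))
      | exact aC_inj_left hk0 (by intro hi; exact hadj.ne (by simp [hi]))
  · rcases hv1 with rfl | rfl <;> rcases hv2 with h | h <;> simp_all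
    all_goals first
      | exact aC_ne_cC hk0
      | exact fun hc => aC_ne_cC hk0 hc.symm
      | exact aC_ne_dC hk0 hα1 hα2
      | exact fun hc => aC_ne_dC hk0 hα1 hα2 hc.symm
      | exact dC_inj hk0 hα2 hne
      | exact aC_inj_right hk0 hne
      | exact aC_inj_left hk0 hne
      | exact aC_inj_right hk0 (by intro hj; exact hadj.ne (by simp [hj]))
      | exact aC_inj_left hk0 (by intro hi; exact hadj.ne (by simp [hi]))
  -- e = eB i j
  · rcases hv1 with rfl | rfl <;> simp_all
  · rcases hv1 with rfl | rfl <;> simp_all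
  · rcases hv1 with rfl | rfl <;> rcases hv2 with h | h <;> simp_all
    all_goals first
      | exact aC_ne_cC hk0
      | exact fun hc => aC_ne_cC hk0 hc.symm
      | exact aC_ne_dC hk0 hα1 hα2
      | exact fun hc => aC_ne_dC hk0 hα1 hα2 hc.symm
      | exact dC_inj hk0 hα2 hne
      | exact aC_inj_right hk0 hne
      | exact aC_inj_left hk0 hne
      | exact aC_inj_right hk0 (by intro hj; exact hadj.ne (by simp [hj]))
      | exact aC_inj_left hk0 (by intro hi; exact hadj.ne (by simp [hi]))
  · rcases hv1 with rfl | rfl <;> rcases hv2 with h | h <;> simp_all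
    all_goals first
      | exact aC_ne_cC hk0
      | exact fun hc => aC_ne_cC hk0 hc.symm
      | exact aC_ne_dC hk0 hα1 hα2
      | exact fun hc => aC_ne_dC hk0 hα1 hα2 hc.symm
      | exact dC_inj hk0 hα2 hne
      | exact aC_inj_right hk0 hne
      | exact aC_inj_left hk0 hne
      | exact aC_inj_right hk0 (by intro hj; exact hadj.ne (by simp [hj]))
      | exact aC_inj_left hk0 (by intro hi; exact hadj.ne (by simp [hi]))
  · rcases hv1 with rfl | rfl <;> rcases hv2 with h | h <;> simp_all
    all_goals first
      | exact aC_ne_cC hk0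
      | exact fun hc => aC_ne_cC hk0 hc.symm
      | exact aC_ne_dC hk0 hα1 hα2
      | exact fun hc => aC_ne_dC hk0 hα1 hα2 hc.symm
      | exact dC_inj hk0 hα2 hne
      | exact aC_inj_right hk0 hne
      | exact aC_inj_left hk0 hne
      | exact aC_inj_right hk0 (by intro hj; exact hadj.ne (by simp [hj]))
      | exact aC_inj_left hk0 (by intro hi; exact hadj.ne (by simp [hi]))

end Proper

section OrderList
variable {k α : ℕ}

def baseL (k : ℕ) : List ((EG k).edgeSet) :=
  ((List.finRange (k-1)).map (eP k)) ++
  (((List.finRange (k-1)) ×ˢ (List.finRange (k-1))).map (fun p => eB k p.1 p.2)) ++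
  ((List.finRange (k-1)).map (eQ k)) ++ [edgeQQ k]

noncomputable def ordL (k α : ℕ) : List ((EG k).edgeSet) :=
  (baseL k).mergeSort (fun a b => decide (rk k α a ≤ rk k α b))

@[simp] lemma eP_mem_base (i : Fin (k-1)) : eP k i ∈ baseL k := by simp [baseL]
@[simp] lemma eQ_mem_base (j : Fin (k-1)) : eQ k j ∈ baseL k := by simp [baseL]
@[simp] lemma eB_mem_base (i j : Fin (k-1)) : eB k i j ∈ baseL k := by
  simp [baseL, List.mem_product]
@[simp] lemma eQQ_mem_base : edgeQQ k ∈ baseL k := by simp [baseL]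
@[simp] lemma ePP_not_mem_base : edgePP k ∉ baseL k := by simp [baseL]

@[simp] lemma mem_ordL_iff {e : (EG k).edgeSet} : e ∈ ordL k α ↔ e ∈ baseL k :=
  List.mem_mergeSort

lemma nodup_base : (baseL k).Nodup := by
  have hP : ((List.finRange (k-1)).map (eP k)).Nodup :=
    (List.nodup_finRange _).map (fun a b h => eP_inj.mp h)
  have hQ : ((List.finRange (k-1)).map (eQ k)).Nodup :=
    (List.nodup_finRange _).map (fun a b h => eQ_inj.mp h)
  have hB : ((((List.finRange (k-1)) ×ˢ (List.finRange (k-1)))).map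
      (fun p : Fin (k-1) × Fin (k-1) => eB k p.1 p.2)).Nodup := by
    refine List.Nodup.map ?_ ((List.nodup_finRange _).product (List.nodup_finRange _))
    rintro ⟨a, b⟩ ⟨c, d⟩ h
    obtain ⟨h1, h2⟩ := eB_inj.mp h
    simp_all
  unfold baseL
  refine ((hP.append hB ?_).append hQ ?_).append (List.nodup_singleton _) ?_
  · intro a ha hb; simp only [List.mem_map] at ha hb
    obtain ⟨i, -, rfl⟩ := ha; obtain ⟨p, -, hp⟩ := hb
    exact eB_ne_eP hp
  · intro a ha hb
    simp only [List.mem_append, List.mem_map] at ha hb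
    obtain ⟨j, -, hj⟩ := hb
    rcases ha with ⟨i, -, hi⟩ | ⟨p, -, hp⟩
    · exact eP_ne_eQ (hi.trans hj.symm)
    · exact eB_ne_eQ (hp.trans hj.symm)
  · intro a ha hb
    simp only [List.mem_append, List.mem_map, List.mem_singleton] at ha hb
    subst hb
    rcases ha with (⟨i, -, h⟩ | ⟨p, -, h⟩) | ⟨j, -, h⟩
    · exact eP_ne_edgeQQ h
    · exact eB_ne_edgeQQ h
    · exact eQ_ne_edgeQQ h

lemma nodup_ordL : (edgePP k :: ordL k α).Nodup := by
  refine List.nodup_cons.mpr ⟨?_, ?_⟩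
  · simp
  · exact ((List.mergeSort_perm (baseL k) _).nodup_iff).mpr nodup_base

lemma all_mem_ordL (e : (EG k).edgeSet) : e ∈ edgePP k :: ordL k α := by
  rcases edge_cases e with rfl | rfl | ⟨i, rfl⟩ | ⟨j, rfl⟩ | ⟨i, j, rfl⟩ <;> simp

lemma sorted_ordL : (ordL k α).Pairwise (fun a b => rk k α a ≤ rk k α b) := by
  have h := List.pairwise_mergeSort (le := fun a b => decide (rk k α a ≤ rk k α b))
    (fun a b c h1 h2 => by simp only [decide_eq_true_eq] at *; omega)
    (fun a b => by simp only [Bool.or_eq_true, decide_eq_true_eq]; omega)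
    (baseL k)
  exact h.imp (by simp)

end OrderList

section Witness
variable {k α : ℕ}

lemma Fc_le (hk : 7 ≤ k) (hα2 : α ≤ k) (e : (EG k).edgeSet) : Fc k α e ≤ k := by
  have hk0 : 0 < k := by omega
  rcases edge_cases e with rfl | rfl | ⟨i, rfl⟩ | ⟨j, rfl⟩ | ⟨i, j, rfl⟩ <;> simp
  · exact hα2
  · exact hα2
  · exact cC_le
  · exact dC_le hk0
  · exact aC_le hk0

lemma Fc_pos (hα1 : 1 ≤ α) (e : (EG k).edgeSet) : 0 < Fc k α e := by
  rcases edge_cases e with rfl | rfl | ⟨i, rfl⟩ | ⟨j, rfl⟩ | ⟨i, j, rfl⟩ <;> simp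
  · omega
  · omega
  · exact cC_pos
  · exact dC_pos
  · exact aC_pos

lemma key_wit (hk : 7 ≤ k) (hα1 : 1 ≤ α) (hα2 : α ≤ k) :
    ∀ v ∈ ordL k α, ∀ s, 0 < s → s < Fc k α v →
      ∃ z, ((EG k).lineGraph).Adj v z ∧ Fc k α z = s ∧
        (z = edgePP k ∨ (z ∈ ordL k α ∧ rk k α z < rk k α v)) := by
  have hk0 : 0 < k := by omega
  have hk2 : 2 ≤ k := by omega
  intro v hv s hs1 hs2
  rcases edge_cases v with rfl | rfl | ⟨i, rfl⟩ | ⟨j, rfl⟩ | ⟨i, j, rfl⟩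
  · simp at hv
  · rw [Fc_edgeQQ] at hs2
    obtain ⟨j, hj⟩ := exists_dwit hα2 hs1 hs2
    refine ⟨eQ k j, ladj (by simp) EGVert.q' (by simp [edgeQQ, Sym2.mem_iff])
      (by simp [eQ, Sym2.mem_iff]), by simp [hj], Or.inr ⟨by simp, ?_⟩⟩
    have := dC_le (α := α) hk0 (j := j)
    simp only [rk_eQ, rk_edgeQQ]; omega
  · rw [Fc_eP] at hs2
    by_cases hsα : s = α
    · subst hsα
      exact ⟨edgePP k, ladj (by simp) EGVert.p' (by simp [eP, Sym2.mem_iff])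
        (by simp [edgePP, Sym2.mem_iff]), by simp, Or.inl rfl⟩
    · obtain ⟨i', hi', hlt⟩ := exists_cwit hα1 hs1 hs2 hsα
      refine ⟨eP k i', ladj (by simp; rintro rfl; omega) EGVert.p'
        (by simp [eP, Sym2.mem_iff]) (by simp [eP, Sym2.mem_iff]),
        by simp [hi'], Or.inr ⟨by simp, ?_⟩⟩
      simp only [rk_eP]; omega
  · rw [Fc_eQ] at hs2
    have hsd : s ≠ dC k α j := by omega
    have hsk : s ≤ k := le_trans (le_of_lt hs2) (dC_le hk0)
    obtain ⟨i', hi'⟩ := exists_col hk2 hα1 hα2 hs1 hsk hsd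
    refine ⟨eB k i' j, ladj (by simp) (EGVert.Q j) (by simp [eQ, Sym2.mem_iff])
      (by simp [eB, Sym2.mem_iff]), by simp [hi'], Or.inr ⟨by simp, ?_⟩⟩
    have := dC_pos (k := k) (α := α) (j := j)
    simp only [rk_eB, rk_eQ, hi']; omega
  · rw [Fc_eB] at hs2
    by_cases hsc : s = cC α i
    · subst hsc
      refine ⟨eP k i, ladj (by simp) (EGVert.P i) (by simp [eB, Sym2.mem_iff])
        (by simp [eP, Sym2.mem_iff]), by simp, Or.inr ⟨by simp, ?_⟩⟩
      have := aC_pos (k := k) (α := α) (i := i) (j := j)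
      have := i.isLt
      simp only [rk_eP, rk_eB]; omega
    · have hsk : s ≤ k := le_trans (le_of_lt hs2) (aC_le hk0)
      obtain ⟨j', hj'⟩ := exists_row hk2 hs1 hsk hsc
      refine ⟨eB k i j', ladj (by simp; rintro rfl; omega) (EGVert.P i)
        (by simp [eB, Sym2.mem_iff]) (by simp [eB, Sym2.mem_iff]),
        by simp [hj'], Or.inr ⟨by simp, ?_⟩⟩
      simp only [rk_eB, hj']; omega

lemma key_conn (hk : 7 ≤ k) (hα1 : 1 ≤ α) (hα2 : α ≤ k) :
    ∀ v ∈ ordL k α, ∃ z, ((EG k).lineGraph).Adj v z ∧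
      (z = edgePP k ∨ (z ∈ ordL k α ∧ rk k α z < rk k α v)) := by
  have hk0 : 0 < k := by omega
  have h0 : (0 : ℕ) < k - 1 := by omega
  intro v hv
  rcases edge_cases v with rfl | rfl | ⟨i, rfl⟩ | ⟨j, rfl⟩ | ⟨i, j, rfl⟩
  · simp at hv
  · refine ⟨eQ k ⟨0, h0⟩, ladj (by simp) EGVert.q' (by simp [edgeQQ, Sym2.mem_iff])
      (by simp [eQ, Sym2.mem_iff]), Or.inr ⟨by simp, ?_⟩⟩
    have := dC_le (α := α) hk0 (j := (⟨0, h0⟩ : Fin (k-1)))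
    simp only [rk_eQ, rk_edgeQQ]; omega
  · exact ⟨edgePP k, ladj (by simp) EGVert.p' (by simp [eP, Sym2.mem_iff])
      (by simp [edgePP, Sym2.mem_iff]), Or.inl rfl⟩
  · refine ⟨eB k ⟨0, h0⟩ j, ladj (by simp) (EGVert.Q j) (by simp [eQ, Sym2.mem_iff])
      (by simp [eB, Sym2.mem_iff]), Or.inr ⟨by simp, ?_⟩⟩
    have := aC_le (α := α) hk0 (i := (⟨0, h0⟩ : Fin (k-1))) (j := j)
    have := dC_pos (k := k) (α := α) (j := j)
    simp only [rk_eB, rk_eQ]; omega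
  · refine ⟨eP k i, ladj (by simp) (EGVert.P i) (by simp [eB, Sym2.mem_iff])
      (by simp [eP, Sym2.mem_iff]), Or.inr ⟨by simp, ?_⟩⟩
    have := aC_pos (k := k) (α := α) (i := i) (j := j)
    have := i.isLt
    simp only [rk_eP, rk_eB]; omega

end Witness

end St12

theorem statement12 (k : ℕ) (hk : 7 ≤ k) (α : ℕ) (hα : α ∈ Finset.Icc 1 k) :
    ∃ f : (EG k).edgeSet → ℕ,
      IsCGCFrom ((EG k).lineGraph) (edgePP k) α f ∧ ∀ e, f e ≤ k := by
  obtain ⟨hα1, hα2⟩ := Finset.mem_Icc.mp hα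
  have hk0 : 0 < k := by omega
  refine ⟨greedyFrom ((EG k).lineGraph) (Function.update (fun _ => 0) (edgePP k) α)
    (St12.ordL k α), ⟨St12.ordL k α, ?_, rfl⟩, ?_⟩
  · exact isConnectedOrder_of_sorted _ _ _ (St12.rk k α) St12.nodup_ordL St12.all_mem_ordL
      St12.sorted_ordL (St12.key_conn hk hα1 hα2)
  · intro e
    have hFx : St12.Fc k α (edgePP k) = α := rfl
    have heq := greedyFrom_start ((EG k).lineGraph) (St12.Fc k α) (edgePP k)
      (by rw [hFx]; omega) (St12.ordL k α) St12.nodup_ordL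
      (fun v _ z hadj => St12.Fc_proper hk hα1 hα2 v z hadj)
      (fun v _ => St12.Fc_pos hα1 v)
      (by
        intro l₁ v l₂ hd s hs hsf
        have hv : v ∈ St12.ordL k α := by rw [hd]; simp
        obtain ⟨z, hadj, hFz, hz⟩ := St12.key_wit hk hα1 hα2 v hv s hs hsf
        refine ⟨z, hadj, hFz, ?_⟩
        rcases hz with rfl | ⟨hzl, hr⟩
        · exact Or.inl rfl
        · exact Or.inr (mem_left_of_sorted_decomp (St12.rk k α) St12.sorted_ordL hd hzl hr))
    rw [hFx] at heq
    rw [heq]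
    simp only
    split
    · exact St12.Fc_le hk hα2 e
    · omega
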